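/- Let d be an integer with d ≥ 3 and let f : [0,∞) → ℝ be a smooth function satisfying the shrinker equation f''(y) + ((d-1)/y - y/2) f'(y) - (d-1)/(2y²) sin(2 f(y)) = 0 for all y > 0 with f(0) = 0. If f' is bounded on [1,∞) and f(y) converges to a limit b as y → ∞, then lim_{y→∞} y³ f'(y) = -(d-1) sin(2b). -/

import Mathlib

open Real Set Filter Topology

private lemma pow_mul_exp_neg_sq_tendsto (k : ℕ) :
    Tendsto (fun y : ℝ => y ^ k * Real.exp (-(y ^ 2 / 4))) atTop (𝓝 0) := by
  apply squeeze_zero' (g := fun y : ℝ => y ^ k * Real.exp (-y))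
  · filter_upwards [eventually_ge_atTop (0:ℝ)] with y hy
    positivity
  · filter_upwards [eventually_ge_atTop (4:ℝ)] with y hy
    have h1 : y ≤ y ^ 2 / 4 := by nlinarith
    have hyk : (0:ℝ) ≤ y ^ k := by positivity
    exact mul_le_mul_of_nonneg_left (Real.exp_le_exp.mpr (by linarith)) hyk
  · exact Real.tendsto_pow_mul_exp_neg_atTop_nhds_zero k

/-- If `f` solves the harmonic map shrinker equation on `[0,∞)` with `f(0) = 0`, `f'` is
bounded on `[1,∞)`, and `f(y) → b` as `y → ∞`, then `y³ f'(y) → -(d-1) sin(2b)`. -/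
theorem asymptotic_decay (d : ℕ) (hd : 3 ≤ d) (f : ℝ → ℝ) (b : ℝ)
    (hf : ContDiffOn ℝ (⊤ : ℕ∞) f (Ici 0))
    (hode : ∀ y : ℝ, 0 < y →
      deriv (deriv f) y + (((d : ℝ) - 1) / y - y / 2) * deriv f y
        - ((d : ℝ) - 1) / (2 * y ^ 2) * Real.sin (2 * f y) = 0)
    (hf0 : f 0 = 0)
    (hbdd : ∃ M : ℝ, ∀ y : ℝ, 1 ≤ y → |deriv f y| ≤ M)
    (hlim : Tendsto f atTop (𝓝 b)) :
    Tendsto (fun y => y ^ 3 * deriv f y) atTop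
      (𝓝 (-((d : ℝ) - 1) * Real.sin (2 * b))) := by
  obtain ⟨n, rfl⟩ : ∃ n, d = n + 3 := ⟨d - 3, by omega⟩
  obtain ⟨M, hM⟩ := hbdd
  have hopen : IsOpen (Ioi (0:ℝ)) := isOpen_Ioi
  have hf1 : ContDiffOn ℝ (⊤:ℕ∞) f (Ioi 0) := hf.mono Ioi_subset_Ici_self
  have hf' : ∀ y : ℝ, 0 < y → HasDerivAt f (deriv f y) y := fun y hy =>
    ((hf1.contDiffAt (hopen.mem_nhds hy)).differentiableAt (by simp)).hasDerivAt
  have hf2 : ContDiffOn ℝ (⊤:ℕ∞) (deriv f) (Ioi 0) :=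
    hf1.deriv_of_isOpen hopen (le_of_eq (by rfl))
  have hf'' : ∀ y : ℝ, 0 < y → HasDerivAt (deriv f) (deriv (deriv f) y) y := fun y hy =>
    ((hf2.contDiffAt (hopen.mem_nhds hy)).differentiableAt (by simp)).hasDerivAt
  have hEat : ∀ y : ℝ, HasDerivAt (fun y : ℝ => Real.exp (-(y ^ 2 / 4)))
      (-(y / 2) * Real.exp (-(y ^ 2 / 4))) y := by
    intro y
    have h1 : HasDerivAt (fun y : ℝ => -(y ^ 2 / 4)) (-(y / 2)) y := by
      have h2 := ((hasDerivAt_pow 2 y).div_const 4).neg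
      refine h2.congr_deriv ?_
      ring
    have h3 := h1.exp
    convert h3 using 1
    ring
  have hEpos : ∀ y : ℝ, 0 < Real.exp (-(y ^ 2 / 4)) := fun y => Real.exp_pos _
  -- derivative of F
  have hF : ∀ y : ℝ, 0 < y →
      HasDerivAt (fun y : ℝ => y ^ (n+2) * Real.exp (-(y ^ 2 / 4)) * deriv f y)
        (y ^ n * Real.exp (-(y ^ 2 / 4)) * (((n:ℝ)+2) / 2 * Real.sin (2 * f y))) y := by
    intro y hy
    have hy0 : y ≠ 0 := ne_of_gt hy
    have hD := ((hasDerivAt_pow (n+2) y).mul (hEat y)).mul (hf'' y hy)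
    have hode' := hode y hy
    have hv : deriv (deriv f) y
        = ((n:ℝ) + 3 - 1) / (2 * y ^ 2) * Real.sin (2 * f y)
          - (((n:ℝ) + 3 - 1) / y - y / 2) * deriv f y := by
      push_cast at hode'
      linarith
    refine hD.congr_deriv ?_
    simp only [Pi.mul_apply, show n + 2 - 1 = n + 1 from rfl, Nat.cast_add, Nat.cast_ofNat]
    rw [hv]
    field_simp
    ring
  -- derivative of G
  have hG : ∀ y : ℝ, 0 < y →
      HasDerivAt (fun y : ℝ => y ^ n / y * Real.exp (-(y ^ 2 / 4)))
        (y ^ n * Real.exp (-(y ^ 2 / 4)) * (((n:ℝ)-1) / y ^ 2 - 1/2)) y := by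
    intro y hy
    have hy0 : y ≠ 0 := ne_of_gt hy
    have hD := ((hasDerivAt_pow n y).div (hasDerivAt_id y) hy0).mul (hEat y)
    refine hD.congr_deriv ?_
    have hn1 : (n:ℝ) * y ^ (n-1) * y = (n:ℝ) * y ^ n := by
      cases n with
      | zero => simp
      | succ m => rw [show m + 1 - 1 = m from rfl, pow_succ]; ring
    simp only [id_eq, mul_one, Pi.mul_apply, Pi.div_apply]
    rw [hn1]
    field_simp
    ring
  -- G' is eventually nonzero
  have hBneg : ∀ y : ℝ, (n:ℝ) + 2 ≤ y → ((n:ℝ)-1) / y ^ 2 - 1/2 < 0 := by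
    intro y hy
    have hn0 : (0:ℝ) < (n:ℝ) + 2 := by positivity
    have hy0 : (0:ℝ) < y := by linarith
    have hy2 : (0:ℝ) < y ^ 2 := by positivity
    rw [sub_neg, div_lt_iff₀ hy2]
    nlinarith
  have hg'ne : ∀ᶠ y : ℝ in atTop,
      y ^ n * Real.exp (-(y ^ 2 / 4)) * (((n:ℝ)-1) / y ^ 2 - 1/2) ≠ 0 := by
    filter_upwards [eventually_ge_atTop ((n:ℝ)+2)] with y hy
    have hn0 : (0:ℝ) < (n:ℝ) + 2 := by positivity
    have hy0 : (0:ℝ) < y := by linarith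
    have h1 : (0:ℝ) < y ^ n * Real.exp (-(y ^ 2 / 4)) := by positivity
    exact mul_ne_zero (ne_of_gt h1) (ne_of_lt (hBneg y hy))
  -- F tends to 0
  have hF0 : Tendsto (fun y : ℝ => y ^ (n+2) * Real.exp (-(y ^ 2 / 4)) * deriv f y)
      atTop (𝓝 0) := by
    have hb : Tendsto (fun y : ℝ => y ^ (n+2) * Real.exp (-(y ^ 2 / 4)) * M) atTop (𝓝 0) := by
      simpa using (pow_mul_exp_neg_sq_tendsto (n+2)).mul_const M
    apply squeeze_zero_norm' _ hb
    filter_upwards [eventually_ge_atTop (1:ℝ)] with y hy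
    have h1 : (0:ℝ) ≤ y ^ (n+2) * Real.exp (-(y ^ 2 / 4)) := by positivity
    rw [Real.norm_eq_abs, abs_mul, abs_of_nonneg h1]
    exact mul_le_mul_of_nonneg_left (hM y hy) h1
  -- G tends to 0
  have hG0 : Tendsto (fun y : ℝ => y ^ n / y * Real.exp (-(y ^ 2 / 4))) atTop (𝓝 0) := by
    have h1 := (pow_mul_exp_neg_sq_tendsto n).mul tendsto_inv_atTop_zero
    rw [zero_mul] at h1
    exact h1.congr (fun y => by ring)
  -- the ratio of derivatives tends to the limit
  have hdiv : Tendsto (fun y : ℝ =>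
        (y ^ n * Real.exp (-(y ^ 2 / 4)) * (((n:ℝ)+2) / 2 * Real.sin (2 * f y)))
      / (y ^ n * Real.exp (-(y ^ 2 / 4)) * (((n:ℝ)-1) / y ^ 2 - 1/2)))
      atTop (𝓝 (-(((n + 3 : ℕ) : ℝ) - 1) * Real.sin (2 * b))) := by
    have heq : (fun y : ℝ =>
        (y ^ n * Real.exp (-(y ^ 2 / 4)) * (((n:ℝ)+2) / 2 * Real.sin (2 * f y)))
          / (y ^ n * Real.exp (-(y ^ 2 / 4)) * (((n:ℝ)-1) / y ^ 2 - 1/2)))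
        =ᶠ[atTop] (fun y : ℝ =>
          (((n:ℝ)+2) / 2 * Real.sin (2 * f y)) / (((n:ℝ)-1) / y ^ 2 - 1/2)) := by
      filter_upwards [eventually_ge_atTop (1:ℝ)] with y hy
      have hy0 : (0:ℝ) < y := by linarith
      have h1 : y ^ n * Real.exp (-(y ^ 2 / 4)) ≠ 0 := by positivity
      rw [mul_div_mul_left _ _ h1]
    have h2f : Tendsto (fun y => 2 * f y) atTop (𝓝 (2 * b)) := hlim.const_mul 2
    have hsin : Tendsto (fun y => Real.sin (2 * f y)) atTop (𝓝 (Real.sin (2 * b))) :=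
      (Real.continuous_sin.tendsto _).comp h2f
    have hnum : Tendsto (fun y => ((n:ℝ)+2) / 2 * Real.sin (2 * f y)) atTop
        (𝓝 (((n:ℝ)+2) / 2 * Real.sin (2 * b))) := hsin.const_mul _
    have hd1 : Tendsto (fun y : ℝ => ((n:ℝ)-1) / y ^ 2) atTop (𝓝 0) :=
      Tendsto.div_atTop tendsto_const_nhds (tendsto_pow_atTop two_ne_zero)
    have hden : Tendsto (fun y : ℝ => ((n:ℝ)-1) / y ^ 2 - 1/2) atTop (𝓝 (0 - 1/2)) :=
      hd1.sub_const _
    have hfinal := hnum.div hden (by norm_num)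
    refine Tendsto.congr' heq.symm ?_
    convert (show Tendsto (fun y => ((n:ℝ)+2) / 2 * Real.sin (2 * f y) / (((n:ℝ)-1) / y ^ 2 - 1/2)) atTop _ from hfinal) using 2
    push_cast
    ring
  -- apply L'Hopital
  have hFev : ∀ᶠ y : ℝ in atTop,
      HasDerivAt (fun y : ℝ => y ^ (n+2) * Real.exp (-(y ^ 2 / 4)) * deriv f y)
        (y ^ n * Real.exp (-(y ^ 2 / 4)) * (((n:ℝ)+2) / 2 * Real.sin (2 * f y))) y := by
    filter_upwards [eventually_gt_atTop (0:ℝ)] with y hy using hF y hy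
  have hGev : ∀ᶠ y : ℝ in atTop,
      HasDerivAt (fun y : ℝ => y ^ n / y * Real.exp (-(y ^ 2 / 4)))
        (y ^ n * Real.exp (-(y ^ 2 / 4)) * (((n:ℝ)-1) / y ^ 2 - 1/2)) y := by
    filter_upwards [eventually_gt_atTop (0:ℝ)] with y hy using hG y hy
  have main := HasDerivAt.lhopital_zero_atTop hFev hGev hg'ne hF0 hG0 hdiv
  refine Tendsto.congr' ?_ main
  filter_upwards [eventually_ge_atTop (1:ℝ)] with y hy
  have hy0 : (0:ℝ) < y := by linarith
  have hGne : y ^ n / y * Real.exp (-(y ^ 2 / 4)) ≠ 0 := by positivity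
  rw [div_eq_iff hGne]
  field_simp
  ring
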